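/- Let p be a prime with p ≡ 1 (mod 4). Then (p−1)/2 ≤ \overline{I}(p,2) ≤ (p+3)/2; that is, the maximum cardinality of a subset of (ℤ/pℤ)² whose points are pairwise at integral distance and no three of whose points are collinear lies between (p−1)/2 and (p+3)/2. -/

import Mathlib

/-- Two points `u, v ∈ (ℤ/nℤ)²` are at integral distance if there exists
`d ∈ ℤ/nℤ` with `(u₁ - v₁)² + (u₂ - v₂)² = d²`. -/
def IntegralDistance2 (n : ℕ) (u v : ZMod n × ZMod n) : Prop :=
  ∃ d : ZMod n, (u.1 - v.1) ^ 2 + (u.2 - v.2) ^ 2 = d ^ 2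

/-- Points `p₁, p₂, p₃ ∈ (ℤ/nℤ)²` are collinear if there are
`a, b, t₁, t₂, wᵢ ∈ ℤ/nℤ` with `pᵢ = (a + wᵢ·t₁, b + wᵢ·t₂)`. -/
def Collinear3 (n : ℕ) (p₁ p₂ p₃ : ZMod n × ZMod n) : Prop :=
  ∃ a b t₁ t₂ w₁ w₂ w₃ : ZMod n,
    p₁.1 = a + w₁ * t₁ ∧ p₁.2 = b + w₁ * t₂ ∧
    p₂.1 = a + w₂ * t₁ ∧ p₂.2 = b + w₂ * t₂ ∧
    p₃.1 = a + w₃ * t₁ ∧ p₃.2 = b + w₃ * t₂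

/-- A set of points of `(ℤ/nℤ)²` is in semi-general position if no three of its
points are collinear. -/
def SemiGeneralPosition (n : ℕ) (S : Finset (ZMod n × ZMod n)) : Prop :=
  ∀ p₁ ∈ S, ∀ p₂ ∈ S, ∀ p₃ ∈ S,
    p₁ ≠ p₂ → p₁ ≠ p₃ → p₂ ≠ p₃ → ¬ Collinear3 n p₁ p₂ p₃

/-- `maxIntegralCardSGP n` (denoted `Ī(n,2)` in the paper) is the maximum
cardinality of a subset of `(ℤ/nℤ)²` with pairwise integral distances and
no three points collinear. -/
noncomputable def maxIntegralCardSGP (n : ℕ) : ℕ :=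
  sSup {k : ℕ | ∃ S : Finset (ZMod n × ZMod n),
    (∀ u ∈ S, ∀ v ∈ S, IntegralDistance2 n u v) ∧
      SemiGeneralPosition n S ∧ S.card = k}


open Finset


lemma two_ne_zero_zmod (p : ℕ) [hpf : Fact p.Prime] (hp2 : p ≠ 2) : (2 : ZMod p) ≠ 0 := by
  have hp := hpf.out
  have : ((2 : ℕ) : ZMod p) ≠ 0 := by
    rw [Ne, ZMod.natCast_eq_zero_iff]
    exact fun h => hp2 ((Nat.prime_dvd_prime_iff_eq hp Nat.prime_two).mp h)
  simpa using this

lemma card_squares (p : ℕ) [hpf : Fact p.Prime] (hp2 : p ≠ 2) :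
    (univ.filter (fun a : ZMod p => IsSquare a)).card = (p + 1) / 2 := by
  have hp := hpf.out
  have h2 : (2 : ZMod p) ≠ 0 := two_ne_zero_zmod p hp2
  classical
  have hmap : ∀ x : ZMod p, x ∈ (univ : Finset (ZMod p)) →
      x ^ 2 ∈ univ.filter (fun a : ZMod p => IsSquare a) := by
    intro x _
    simp only [mem_filter, mem_univ, true_and]
    exact ⟨x, sq x⟩
  have hcount := Finset.card_eq_sum_card_fiberwise hmap
  have hfib : ∀ a ∈ univ.filter (fun a : ZMod p => IsSquare a),
      (univ.filter (fun x : ZMod p => x ^ 2 = a)).card = if a = 0 then 1 else 2 := by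
    intro a ha
    rw [mem_filter] at ha
    obtain ⟨-, r, hr⟩ := ha
    by_cases h0 : a = 0
    · subst h0
      have : (univ.filter (fun x : ZMod p => x ^ 2 = 0)) = {0} := by
        ext x; simp [pow_eq_zero_iff]
      rw [this, card_singleton, if_pos rfl]
    · have hr0 : r ≠ 0 := by rintro rfl; exact h0 (by simp [hr])
      have : (univ.filter (fun x : ZMod p => x ^ 2 = a)) = {r, -r} := by
        ext x
        simp only [mem_filter, mem_univ, true_and, mem_insert, mem_singleton]
        rw [hr, ← sq]
        exact sq_eq_sq_iff_eq_or_eq_neg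
      rw [this, if_neg h0, card_insert_of_notMem, card_singleton]
      simp only [mem_singleton]
      intro heq
      have h2r : (2 : ZMod p) * r = 0 := by linear_combination heq
      rcases mul_eq_zero.mp h2r with h | h
      · exact h2 h
      · exact hr0 h
  rw [Finset.sum_congr rfl hfib] at hcount
  have h0m : (0 : ZMod p) ∈ univ.filter (fun a : ZMod p => IsSquare a) := by
    simp only [mem_filter, mem_univ, true_and]
    exact ⟨0, by simp⟩
  rw [← Finset.add_sum_erase _ _ h0m, if_pos rfl] at hcount
  rw [Finset.sum_congr rfl (fun a ha => if_neg (Finset.ne_of_mem_erase ha))] at hcount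
  rw [Finset.sum_const, smul_eq_mul, Finset.card_erase_of_mem h0m] at hcount
  have hcard : Fintype.card (ZMod p) = p := ZMod.card p
  rw [Finset.card_univ, hcard] at hcount
  have hpos : 0 < (univ.filter (fun a : ZMod p => IsSquare a)).card :=
    Finset.card_pos.mpr ⟨0, h0m⟩
  omega

lemma collinear_of_fst_eq (n : ℕ) (q₁ q₂ q₃ : ZMod n × ZMod n)
    (h12 : q₂.1 = q₁.1) (h13 : q₃.1 = q₁.1) : Collinear3 n q₁ q₂ q₃ :=
  ⟨q₁.1, 0, 0, 1, q₁.2, q₂.2, q₃.2, by simp [h12, h13]⟩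

lemma collinear_of_slope (n : ℕ) (P Q R : ZMod n × ZMod n) (m : ZMod n)
    (hQ : Q.2 - P.2 = (Q.1 - P.1) * m) (hR : R.2 - P.2 = (R.1 - P.1) * m) :
    Collinear3 n P Q R :=
  ⟨P.1, P.2, 1, m, 0, Q.1 - P.1, R.1 - P.1, by simp, by simp,
    by ring, by linear_combination hQ, by ring, by linear_combination hR⟩

lemma prod_bound (p : ℕ) [hpf : Fact p.Prime] (hp4 : p % 4 = 1)
    (T : Finset (ZMod p × ZMod p))
    (h1 : ∀ u ∈ T, ∀ v ∈ T, IsSquare ((u.1 - v.1) * (u.2 - v.2)))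
    (h2 : ∀ q₁ ∈ T, ∀ q₂ ∈ T, ∀ q₃ ∈ T, q₁ ≠ q₂ → q₁ ≠ q₃ → q₂ ≠ q₃ →
      ¬ Collinear3 p q₁ q₂ q₃) :
    T.card ≤ (p + 3) / 2 := by
  classical
  have hp := hpf.out
  have hp2 : p ≠ 2 := by omega
  set SQ := univ.filter (fun a : ZMod p => IsSquare a) with hSQ
  set C : Finset (Option (ZMod p)) := insert none (SQ.image some) with hC
  have hCcard : C.card = (p + 3) / 2 := by
    rw [hC, card_insert_of_notMem (by simp),
      card_image_of_injective _ (Option.some_injective _), card_squares p hp2]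
    omega
  have step : ∀ P ∈ T, (T.erase P).card ≤ C.card ∧
      ((T.erase P).card = C.card → ∃ Q ∈ T, Q ≠ P ∧ Q.1 = P.1) := by
    intro P hP
    set σ : ZMod p × ZMod p → Option (ZMod p) :=
      fun Q => if Q.1 = P.1 then none else some ((Q.2 - P.2) * (Q.1 - P.1)⁻¹) with hσ
    have hmaps : ∀ Q ∈ T.erase P, σ Q ∈ C := by
      intro Q hQ
      have hQT := mem_of_mem_erase hQ
      by_cases hx : Q.1 = P.1
      · simp [hσ, hx, hC]
      · have hdx : Q.1 - P.1 ≠ 0 := sub_ne_zero.mpr hx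
        obtain ⟨e, he⟩ := h1 Q hQT P hP
        have hsq : IsSquare ((Q.2 - P.2) * (Q.1 - P.1)⁻¹) := by
          refine ⟨e * (Q.1 - P.1)⁻¹, ?_⟩
          have hre : (e * (Q.1 - P.1)⁻¹) * (e * (Q.1 - P.1)⁻¹)
              = ((Q.1 - P.1) * (Q.2 - P.2)) * ((Q.1 - P.1)⁻¹ * (Q.1 - P.1)⁻¹) := by
            rw [he]; ring
          rw [hre]
          field_simp
        simp only [hσ, if_neg hx, hC, mem_insert, mem_image]
        exact Or.inr ⟨_, by simp [hSQ, hsq], rfl⟩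
    have hinj : Set.InjOn σ (T.erase P) := by
      intro Q hQ R hR heq
      simp only [Finset.coe_erase, Set.mem_diff, Set.mem_singleton_iff, mem_coe] at hQ hR
      obtain ⟨hQT, hQP⟩ := hQ
      obtain ⟨hRT, hRP⟩ := hR
      by_contra hne
      by_cases hx : Q.1 = P.1
      · by_cases hy : R.1 = P.1
        · exact h2 P hP Q hQT R hRT (Ne.symm hQP) (Ne.symm hRP) hne
            (collinear_of_fst_eq p P Q R hx hy)
        · simp [hσ, hx, hy] at heq
      · by_cases hy : R.1 = P.1
        · simp [hσ, hx, hy] at heq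
        · simp only [hσ, if_neg hx, if_neg hy, Option.some.injEq] at heq
          have hdQ : Q.1 - P.1 ≠ 0 := sub_ne_zero.mpr hx
          have hdR : R.1 - P.1 ≠ 0 := sub_ne_zero.mpr hy
          have hQs : Q.2 - P.2 = (Q.1 - P.1) * ((Q.2 - P.2) * (Q.1 - P.1)⁻¹) := by
            field_simp
          have hRs : R.2 - P.2 = (R.1 - P.1) * ((Q.2 - P.2) * (Q.1 - P.1)⁻¹) := by
            rw [heq]; field_simp
          exact h2 P hP Q hQT R hRT (Ne.symm hQP) (Ne.symm hRP) hne
            (collinear_of_slope p P Q R _ hQs hRs)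
    constructor
    · exact Finset.card_le_card_of_injOn σ hmaps hinj
    · intro hEq
      have himg : (T.erase P).image σ = C := by
        apply Finset.eq_of_subset_of_card_le
        · intro x hx
          obtain ⟨Q, hQ, rfl⟩ := mem_image.mp hx
          exact hmaps Q hQ
        · rw [Finset.card_image_of_injOn hinj, hEq]
      have hnone : none ∈ (T.erase P).image σ := by rw [himg]; simp [hC]
      obtain ⟨Q, hQ, hQn⟩ := mem_image.mp hnone
      refine ⟨Q, mem_of_mem_erase hQ, ne_of_mem_erase hQ, ?_⟩
      by_contra hx
      simp [hσ, hx] at hQn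
  by_contra hgt
  push_neg at hgt
  have hTne : T.Nonempty := Finset.card_pos.mp (by omega)
  have hcard : T.card = (p + 3) / 2 + 1 := by
    obtain ⟨P, hP⟩ := hTne
    have := (step P hP).1
    rw [Finset.card_erase_of_mem hP, hCcard] at this
    omega
  have hpart : ∀ P ∈ T, ∃ Q ∈ T, Q ≠ P ∧ Q.1 = P.1 := by
    intro P hP
    exact (step P hP).2 (by rw [Finset.card_erase_of_mem hP, hCcard, hcard]; omega)
  have hfibs := Finset.card_eq_sum_card_fiberwise
    (fun (q : ZMod p × ZMod p) (hq : q ∈ T) => mem_image_of_mem Prod.fst hq)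
  have hfib2 : ∀ x ∈ T.image Prod.fst, (T.filter fun q => q.1 = x).card = 2 := by
    intro x hx
    obtain ⟨P, hPT, rfl⟩ := mem_image.mp hx
    obtain ⟨Q, hQT, hQP, hQx⟩ := hpart P hPT
    have hle : (T.filter fun q => q.1 = P.1).card ≤ 2 := by
      by_contra hlt
      push_neg at hlt
      obtain ⟨a, b, c, ha, hb, hc, hab, hac, hbc⟩ :=
        Finset.two_lt_card_iff.mp hlt
      rw [mem_filter] at ha hb hc
      exact h2 a ha.1 b hb.1 c hc.1 hab hac hbc
        (collinear_of_fst_eq p a b c (hb.2.trans ha.2.symm) (hc.2.trans ha.2.symm))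
    have hge : 2 ≤ (T.filter fun q => q.1 = P.1).card := by
      have hsub : {Q, P} ⊆ T.filter fun q => q.1 = P.1 := by
        intro z hz
        rcases Finset.mem_insert.mp hz with rfl | hz
        · exact mem_filter.mpr ⟨hQT, hQx⟩
        · rw [Finset.mem_singleton.mp hz]
          exact mem_filter.mpr ⟨hPT, rfl⟩
      calc 2 = ({Q, P} : Finset (ZMod p × ZMod p)).card := by
            rw [Finset.card_insert_of_notMem (by simpa using hQP), card_singleton]
        _ ≤ _ := Finset.card_le_card hsub
    omega
  rw [Finset.sum_congr rfl hfib2, Finset.sum_const, smul_eq_mul] at hfibs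
  omega

lemma upper_bound (p : ℕ) [hpf : Fact p.Prime] (hp4 : p % 4 = 1)
    (S : Finset (ZMod p × ZMod p))
    (hd : ∀ u ∈ S, ∀ v ∈ S, IntegralDistance2 p u v)
    (hs : SemiGeneralPosition p S) : S.card ≤ (p + 3) / 2 := by
  classical
  have hp := hpf.out
  have hp2 : p ≠ 2 := by omega
  have h2 : (2 : ZMod p) ≠ 0 := two_ne_zero_zmod p hp2
  obtain ⟨c, hc⟩ : ∃ c : ZMod p, c ^ 2 = -1 := by
    obtain ⟨r, hr⟩ := (ZMod.exists_sq_eq_neg_one_iff (p := p)).mpr (by omega)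
    exact ⟨r, by rw [hr]; ring⟩
  have hc0 : c ≠ 0 := by
    intro h; rw [h] at hc
    simp only [ne_eq, zero_pow, OfNat.ofNat_ne_zero, not_false_eq_true] at hc
    exact one_ne_zero (neg_eq_zero.mp hc.symm)
  set L : ZMod p × ZMod p → ZMod p × ZMod p :=
    fun u => (u.1 + c * u.2, u.1 - c * u.2) with hL
  have hLinj : Function.Injective L := by
    intro u v huv
    rw [Prod.ext_iff] at huv ⊢
    obtain ⟨e1, e2⟩ := huv
    simp only [hL] at e1 e2
    constructor
    · have h : (2 : ZMod p) * u.1 = 2 * v.1 := by linear_combination e1 + e2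
      exact mul_left_cancel₀ h2 h
    · have h : (2 * c : ZMod p) * u.2 = (2 * c) * v.2 := by linear_combination e1 - e2
      exact mul_left_cancel₀ (mul_ne_zero h2 hc0) h
  rw [← Finset.card_image_of_injective S hLinj]
  apply prod_bound p hp4
  · intro u hu v hv
    obtain ⟨u0, hu0, rfl⟩ := Finset.mem_image.mp hu
    obtain ⟨v0, hv0, rfl⟩ := Finset.mem_image.mp hv
    obtain ⟨d, hd'⟩ := hd u0 hu0 v0 hv0
    refine ⟨d, ?_⟩
    simp only [hL]
    linear_combination hd' - (u0.2 - v0.2) ^ 2 * hc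
  · intro q₁ hq₁ q₂ hq₂ q₃ hq₃ h12 h13 h23 hcol
    obtain ⟨u₁, hu₁, rfl⟩ := Finset.mem_image.mp hq₁
    obtain ⟨u₂, hu₂, rfl⟩ := Finset.mem_image.mp hq₂
    obtain ⟨u₃, hu₃, rfl⟩ := Finset.mem_image.mp hq₃
    refine hs u₁ hu₁ u₂ hu₂ u₃ hu₃ (fun h => h12 (by rw [h]))
      (fun h => h13 (by rw [h])) (fun h => h23 (by rw [h])) ?_
    obtain ⟨a, b, t₁, t₂, w₁, w₂, w₃, e11, e12, e21, e22, e31, e32⟩ := hcol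
    simp only [hL] at e11 e12 e21 e22 e31 e32
    refine ⟨(a + b) / 2, (a - b) / (2 * c), (t₁ + t₂) / 2, (t₁ - t₂) / (2 * c),
      w₁, w₂, w₃, ?_, ?_, ?_, ?_, ?_, ?_⟩
    · field_simp; linear_combination e11 + e12
    · field_simp; linear_combination e11 - e12
    · field_simp; linear_combination e21 + e22
    · field_simp; linear_combination e21 - e22
    · field_simp; linear_combination e31 + e32
    · field_simp; linear_combination e31 - e32

lemma key_id {F : Type*} [Field F] (r s c : F) (hr : r ≠ 0) (hs : s ≠ 0)
    (hc : c ^ 2 = -1) (h2 : (2 : F) ≠ 0) :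
    ((r*r + (r*r)⁻¹)/2 - (s*s + (s*s)⁻¹)/2) ^ 2
      + ((r*r - (r*r)⁻¹)/(2*c) - (s*s - (s*s)⁻¹)/(2*c)) ^ 2
      = (c*(r*r - s*s)/(r*s)) ^ 2 := by
  have hc0 : c ≠ 0 := by
    intro h; rw [h] at hc
    simp only [ne_eq, zero_pow, OfNat.ofNat_ne_zero, not_false_eq_true] at hc
    exact one_ne_zero (neg_eq_zero.mp hc.symm)
  have h4 : (4 : F) ≠ 0 := by
    have h : (4 : F) = 2 * 2 := by norm_num
    rw [h]; exact mul_ne_zero h2 h2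
  rw [div_sub_div_same, div_sub_div_same, div_pow, div_pow, div_pow, mul_pow, mul_pow, hc]
  have e2 : (2:F)^2 = 4 := by norm_num
  rw [e2]
  have hrr : r * r ≠ 0 := mul_ne_zero hr hr
  have hss : s * s ≠ 0 := mul_ne_zero hs hs
  have hrs : (r * s)^2 ≠ 0 := pow_ne_zero 2 (mul_ne_zero hr hs)
  field_simp
  ring

lemma circle_id {F : Type*} [Field F] (z c : F) (hz : z ≠ 0)
    (hc : c ^ 2 = -1) (h2 : (2 : F) ≠ 0) (hc0 : c ≠ 0) :
    ((z + z⁻¹)/2) ^ 2 + ((z - z⁻¹)/(2*c)) ^ 2 = 1 := by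
  rw [div_pow, div_pow, mul_pow, hc]
  field_simp
  ring

lemma circle_sgp (p : ℕ) (c : ZMod p) [hpf : Fact p.Prime] (hc : c ^ 2 = -1)
    (h2 : (2 : ZMod p) ≠ 0) (hc0 : c ≠ 0)
    (q₁ q₂ q₃ : ZMod p × ZMod p)
    (hq₁ : q₁.1 ^ 2 + q₁.2 ^ 2 = 1) (hq₂ : q₂.1 ^ 2 + q₂.2 ^ 2 = 1)
    (hq₃ : q₃.1 ^ 2 + q₃.2 ^ 2 = 1)
    (h12 : q₁ ≠ q₂) (h13 : q₁ ≠ q₃) (h23 : q₂ ≠ q₃) :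
    ¬ Collinear3 p q₁ q₂ q₃ := by
  rintro ⟨a, b, t₁, t₂, w₁, w₂, w₃, e11, e12, e21, e22, e31, e32⟩
  have hw12 : w₁ ≠ w₂ := by
    rintro rfl; exact h12 (Prod.ext_iff.mpr ⟨by rw [e11, e21], by rw [e12, e22]⟩)
  have hw13 : w₁ ≠ w₃ := by
    rintro rfl; exact h13 (Prod.ext_iff.mpr ⟨by rw [e11, e31], by rw [e12, e32]⟩)
  have hw23 : w₂ ≠ w₃ := by
    rintro rfl; exact h23 (Prod.ext_iff.mpr ⟨by rw [e21, e31], by rw [e22, e32]⟩)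
  have Q1 : (t₁^2 + t₂^2)*w₁^2 + (2*(a*t₁ + b*t₂))*w₁ + (a^2 + b^2 - 1) = 0 := by
    linear_combination hq₁ - (q₁.1 + a + w₁*t₁)*e11 - (q₁.2 + b + w₁*t₂)*e12
  have Q2 : (t₁^2 + t₂^2)*w₂^2 + (2*(a*t₁ + b*t₂))*w₂ + (a^2 + b^2 - 1) = 0 := by
    linear_combination hq₂ - (q₂.1 + a + w₂*t₁)*e21 - (q₂.2 + b + w₂*t₂)*e22
  have Q3 : (t₁^2 + t₂^2)*w₃^2 + (2*(a*t₁ + b*t₂))*w₃ + (a^2 + b^2 - 1) = 0 := by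
    linear_combination hq₃ - (q₃.1 + a + w₃*t₁)*e31 - (q₃.2 + b + w₃*t₂)*e32
  have h12' : (w₁ - w₂) * ((t₁^2 + t₂^2)*(w₁ + w₂) + 2*(a*t₁ + b*t₂)) = 0 := by
    linear_combination Q1 - Q2
  have hA : (t₁^2 + t₂^2)*(w₁ + w₂) + 2*(a*t₁ + b*t₂) = 0 :=
    (mul_eq_zero.mp h12').resolve_left (sub_ne_zero.mpr hw12)
  have h13' : (w₁ - w₃) * ((t₁^2 + t₂^2)*(w₁ + w₃) + 2*(a*t₁ + b*t₂)) = 0 := by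
    linear_combination Q1 - Q3
  have hB : (t₁^2 + t₂^2)*(w₁ + w₃) + 2*(a*t₁ + b*t₂) = 0 :=
    (mul_eq_zero.mp h13').resolve_left (sub_ne_zero.mpr hw13)
  have hα : t₁^2 + t₂^2 = 0 := by
    have h : (t₁^2 + t₂^2) * (w₂ - w₃) = 0 := by linear_combination hA - hB
    exact (mul_eq_zero.mp h).resolve_right (sub_ne_zero.mpr hw23)
  have hfac : (t₁ + c*t₂) * (t₁ - c*t₂) = 0 := by
    linear_combination hα - t₂^2 * hc
  have huv₁ : (q₁.1 + c*q₁.2) * (q₁.1 - c*q₁.2) = 1 := by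
    linear_combination hq₁ - q₁.2^2 * hc
  have huv₂ : (q₂.1 + c*q₂.2) * (q₂.1 - c*q₂.2) = 1 := by
    linear_combination hq₂ - q₂.2^2 * hc
  rcases mul_eq_zero.mp hfac with ht | ht
  · have hu12 : q₁.1 + c*q₁.2 = q₂.1 + c*q₂.2 := by
      rw [e11, e12, e21, e22]; linear_combination (w₁ - w₂) * ht
    have hu0 : q₂.1 + c*q₂.2 ≠ 0 := by
      intro h; rw [h, zero_mul] at huv₂; exact one_ne_zero huv₂.symm
    have hv12 : q₁.1 - c*q₁.2 = q₂.1 - c*q₂.2 := by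
      have h := huv₁; rw [hu12] at h
      exact mul_left_cancel₀ hu0 (h.trans huv₂.symm)
    have hx : q₁.1 = q₂.1 := by
      have hxx : (2 : ZMod p) * q₁.1 = 2 * q₂.1 := by linear_combination hu12 + hv12
      exact mul_left_cancel₀ h2 hxx
    have hy : q₁.2 = q₂.2 := by
      have hyy : (2*c : ZMod p) * q₁.2 = (2*c) * q₂.2 := by linear_combination hu12 - hv12
      exact mul_left_cancel₀ (mul_ne_zero h2 hc0) hyy
    exact h12 (Prod.ext_iff.mpr ⟨hx, hy⟩)
  · have hv12 : q₁.1 - c*q₁.2 = q₂.1 - c*q₂.2 := by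
      rw [e11, e12, e21, e22]; linear_combination (w₁ - w₂) * ht
    have hv0 : q₂.1 - c*q₂.2 ≠ 0 := by
      intro h; rw [h, mul_zero] at huv₂; exact one_ne_zero huv₂.symm
    have hu12 : q₁.1 + c*q₁.2 = q₂.1 + c*q₂.2 := by
      have h := huv₁; rw [hv12] at h
      exact mul_right_cancel₀ hv0 (h.trans huv₂.symm)
    have hx : q₁.1 = q₂.1 := by
      have hxx : (2 : ZMod p) * q₁.1 = 2 * q₂.1 := by linear_combination hu12 + hv12
      exact mul_left_cancel₀ h2 hxx
    have hy : q₁.2 = q₂.2 := by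
      have hyy : (2*c : ZMod p) * q₁.2 = (2*c) * q₂.2 := by linear_combination hu12 - hv12
      exact mul_left_cancel₀ (mul_ne_zero h2 hc0) hyy
    exact h12 (Prod.ext_iff.mpr ⟨hx, hy⟩)

lemma lower_bound (p : ℕ) [hpf : Fact p.Prime] (hp4 : p % 4 = 1) :
    ∃ S : Finset (ZMod p × ZMod p), (∀ u ∈ S, ∀ v ∈ S, IntegralDistance2 p u v) ∧
      SemiGeneralPosition p S ∧ S.card = (p - 1) / 2 := by
  classical
  have hp := hpf.out
  have hp2 : p ≠ 2 := by omega
  have h2 : (2 : ZMod p) ≠ 0 := two_ne_zero_zmod p hp2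
  obtain ⟨c, hc⟩ : ∃ c : ZMod p, c ^ 2 = -1 := by
    obtain ⟨r, hr⟩ := (ZMod.exists_sq_eq_neg_one_iff (p := p)).mpr (by omega)
    exact ⟨r, by rw [hr]; ring⟩
  have hc0 : c ≠ 0 := by
    intro h; rw [h] at hc
    simp only [ne_eq, zero_pow, OfNat.ofNat_ne_zero, not_false_eq_true] at hc
    exact one_ne_zero (neg_eq_zero.mp hc.symm)
  set D : Finset (ZMod p) := (univ.filter (fun a : ZMod p => IsSquare a)).erase 0 with hD
  have hDcard : D.card = (p - 1) / 2 := by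
    rw [hD, Finset.card_erase_of_mem
      (Finset.mem_filter.mpr ⟨Finset.mem_univ _, ⟨0, by simp⟩⟩), card_squares p hp2]
    omega
  set f : ZMod p → ZMod p × ZMod p :=
    fun z => ((z + z⁻¹)/2, (z - z⁻¹)/(2*c)) with hf
  have hrec : ∀ z : ZMod p, z ≠ 0 → (f z).1 + c * (f z).2 = z := by
    intro z hz
    simp only [hf]
    field_simp
    ring
  have hinj : Set.InjOn f D := by
    intro z hz w hw hzw
    have hz0 : z ≠ 0 := Finset.ne_of_mem_erase hz
    have hw0 : w ≠ 0 := Finset.ne_of_mem_erase hw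
    rw [← hrec z hz0, ← hrec w hw0, hzw]
  refine ⟨D.image f, ?_, ?_, by rw [Finset.card_image_of_injOn hinj, hDcard]⟩
  · intro u hu v hv
    obtain ⟨z, hz, rfl⟩ := Finset.mem_image.mp hu
    obtain ⟨w, hw, rfl⟩ := Finset.mem_image.mp hv
    have hz0 : z ≠ 0 := Finset.ne_of_mem_erase hz
    have hw0 : w ≠ 0 := Finset.ne_of_mem_erase hw
    obtain ⟨r, hr⟩ := (Finset.mem_filter.mp (Finset.mem_of_mem_erase hz)).2
    obtain ⟨s, hs⟩ := (Finset.mem_filter.mp (Finset.mem_of_mem_erase hw)).2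
    have hr0 : r ≠ 0 := by rintro rfl; exact hz0 (by simp [hr])
    have hs0 : s ≠ 0 := by rintro rfl; exact hw0 (by simp [hs])
    refine ⟨c*(z - w)/(r*s), ?_⟩
    subst hr hs
    simpa only [hf] using key_id r s c hr0 hs0 hc h2
  · intro q₁ hq₁ q₂ hq₂ q₃ hq₃ h12 h13 h23
    obtain ⟨z₁, hz₁, rfl⟩ := Finset.mem_image.mp hq₁
    obtain ⟨z₂, hz₂, rfl⟩ := Finset.mem_image.mp hq₂
    obtain ⟨z₃, hz₃, rfl⟩ := Finset.mem_image.mp hq₃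
    exact circle_sgp p c hc h2 hc0 _ _ _
      (circle_id z₁ c (Finset.ne_of_mem_erase hz₁) hc h2 hc0)
      (circle_id z₂ c (Finset.ne_of_mem_erase hz₂) hc h2 hc0)
      (circle_id z₃ c (Finset.ne_of_mem_erase hz₃) hc h2 hc0)
      h12 h13 h23

theorem maxIntegralCardSGP_of_one_mod_four (p : ℕ) (hp : p.Prime)
    (hp4 : p % 4 = 1) :
    (p - 1) / 2 ≤ maxIntegralCardSGP p ∧ maxIntegralCardSGP p ≤ (p + 3) / 2 := by
  haveI : Fact p.Prime := ⟨hp⟩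
  rw [maxIntegralCardSGP]
  constructor
  · obtain ⟨S, hS1, hS2, hS3⟩ := lower_bound p hp4
    apply le_csSup
    · refine ⟨Fintype.card (ZMod p × ZMod p), ?_⟩
      rintro k ⟨S, -, -, rfl⟩
      exact Finset.card_le_univ S
    · exact ⟨S, hS1, hS2, hS3⟩
  · apply csSup_le
    · refine ⟨0, ∅, ?_, ?_, rfl⟩
      · intro u hu; exact absurd hu (Finset.notMem_empty u)
      · intro q₁ hq₁; exact absurd hq₁ (Finset.notMem_empty q₁)
    · rintro k ⟨S, h1, h2, rfl⟩
      exact upper_bound p hp4 S h1 h2
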